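/- For all integers n > 0 and m ≥ 0, the sum over j from 0 to m of binom(m, j) · j! · (n + m - j - 1)! equals (n + m)!/n. -/

import Mathlib

lemma aux_term (n m j : ℕ) (hn : 0 < n) (hj : j ≤ m) :
    m.choose j * Nat.factorial j * Nat.factorial (n + m - j - 1)
      = Nat.factorial m * Nat.factorial (n - 1) * (n + m - j - 1).choose (n - 1) := by
  have h1 : n - 1 ≤ n + m - j - 1 := by omega
  have h2 : (n + m - j - 1) - (n - 1) = m - j := by omega
  have hfac : (n + m - j - 1).choose (n - 1) * Nat.factorial (n - 1) * Nat.factorial (m - j)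
      = Nat.factorial (n + m - j - 1) := by
    have := Nat.choose_mul_factorial_mul_factorial h1
    rwa [h2] at this
  have hch : m.choose j * Nat.factorial j * Nat.factorial (m - j) = Nat.factorial m :=
    Nat.choose_mul_factorial_mul_factorial hj
  calc m.choose j * Nat.factorial j * Nat.factorial (n + m - j - 1)
      = m.choose j * Nat.factorial j *
        ((n + m - j - 1).choose (n - 1) * Nat.factorial (n - 1) * Nat.factorial (m - j)) := by
        rw [hfac]
    _ = (m.choose j * Nat.factorial j * Nat.factorial (m - j)) *
        ((n + m - j - 1).choose (n - 1) * Nat.factorial (n - 1)) := by ring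
    _ = Nat.factorial m * Nat.factorial (n - 1) * (n + m - j - 1).choose (n - 1) := by
        rw [hch]; ring

lemma aux_sum (n m : ℕ) (hn : 0 < n) :
    ∑ j ∈ Finset.range (m + 1), (n + m - j - 1).choose (n - 1) = (n + m).choose n := by
  have : ∑ j ∈ Finset.range (m + 1), (n + m - j - 1).choose (n - 1)
      = ∑ i ∈ Finset.Icc (n - 1) (n - 1 + m), i.choose (n - 1) := by
    rw [Finset.sum_bij (fun j _ => n + m - j - 1)]
    · intro a ha; simp only [Finset.mem_range] at ha; simp only [Finset.mem_Icc]; omega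
    · intro a ha b hb h; simp only [Finset.mem_range] at ha hb; omega
    · intro b hb; simp only [Finset.mem_Icc] at hb
      exact ⟨n + m - b - 1, Finset.mem_range.mpr (by omega), by omega⟩
    · intro a ha; rfl
  rw [this, Nat.sum_Icc_choose]
  congr 1 <;> omega

theorem stmt_0 (n m : ℕ) (hn : 0 < n) :
    ∑ j ∈ Finset.range (m + 1),
      ((m.choose j : ℚ) * (Nat.factorial j) * (Nat.factorial (n + m - j - 1)))
      = (Nat.factorial (n + m) : ℚ) / n := by
  have key : ∑ j ∈ Finset.range (m + 1),
      m.choose j * Nat.factorial j * Nat.factorial (n + m - j - 1)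
      = Nat.factorial m * Nat.factorial (n - 1) * (n + m).choose n := by
    rw [← aux_sum n m hn, Finset.mul_sum]
    refine Finset.sum_congr rfl fun j hj => ?_
    exact aux_term n m j hn (by simpa [Nat.lt_succ_iff] using hj)
  have keyq : (∑ j ∈ Finset.range (m + 1),
      ((m.choose j : ℚ) * (Nat.factorial j) * (Nat.factorial (n + m - j - 1))))
      = ((Nat.factorial m * Nat.factorial (n - 1) * (n + m).choose n : ℕ) : ℚ) := by
    rw [← key]; push_cast; ring_nf
  rw [keyq]
  have hn' : (n : ℚ) ≠ 0 := by positivity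
  rw [eq_div_iff hn', ← Nat.cast_mul]
  rw [Nat.cast_inj]
  have h1 : n * Nat.factorial (n - 1) = Nat.factorial n := by
    rw [Nat.mul_factorial_pred hn.ne']
  have h2 : (n + m).choose n * Nat.factorial n * Nat.factorial m = Nat.factorial (n + m) := by
    have := Nat.choose_mul_factorial_mul_factorial (Nat.le_add_right n m)
    simpa [Nat.add_sub_cancel_left] using this
  calc Nat.factorial m * Nat.factorial (n - 1) * (n + m).choose n * n
      = (n + m).choose n * (n * Nat.factorial (n - 1)) * Nat.factorial m := by ring
    _ = (n + m).choose n * Nat.factorial n * Nat.factorial m := by rw [h1]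
    _ = Nat.factorial (n + m) := h2
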